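/- arXiv:1807.08506 — 10 statements merged into one kernel-verified Lean document; each statement's English description precedes it below -/
import Mathlib

section
/- Let φ be any property of subsets of ℕ. The following are equivalent: (i) for every k ∈ ℕ there exists a finite set X ⊆ ℕ with at least k elements such that φ(X) holds; (ii) there exist sets R, I ⊆ ℕ with U₂(R, I) such that for every pair of consecutive elements r < r' of R there exists a finite set X ⊆ ℕ such that φ(X) holds and X contains every element of I strictly between r and r'. -/
/-- `r < r'` are consecutive elements of `R`. -/
def ConsecutiveIn (R : Set ℕ) (r r' : ℕ) : Prop :=
  r ∈ R ∧ r' ∈ R ∧ r < r' ∧ ∀ x ∈ R, ¬(r < x ∧ x < r')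

/-- The gap-count sequence of `(R, I)` is unbounded. -/
def GapUnbounded (R I : Set ℕ) : Prop :=
  ∀ k : ℕ, ∃ r r', ConsecutiveIn R r r' ∧ k ≤ {x ∈ I | r < x ∧ x < r'}.ncard

/-- The predicate `U₂(R, I)`. -/
def U₂ (R I : Set ℕ) : Prop :=
  R.Infinite ∧ R ∩ I = ∅ ∧ GapUnbounded R I

/-- Auxiliary recursion. -/
def seqAux (f : ℕ → ℕ → ℕ) : ℕ → ℕ
  | 0 => 0
  | n + 1 => f n (seqAux f n)

theorem stmt0 (φ : Set ℕ → Prop) :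
    (∀ k : ℕ, ∃ X : Set ℕ, X.Finite ∧ k ≤ X.ncard ∧ φ X) ↔
      (∃ R I : Set ℕ, U₂ R I ∧
        ∀ r r', ConsecutiveIn R r r' →
          ∃ X : Set ℕ, X.Finite ∧ φ X ∧ ∀ x ∈ I, r < x → x < r' → x ∈ X) := by
  constructor
  · intro h
    choose X hfin hcard hφ using h
    set M : ℕ → ℕ := fun j => (hfin j).toFinset.sup id with hM
    have hMle : ∀ j x, x ∈ X j → x ≤ M j := by
      intro j x hx
      exact Finset.le_sup (f := id) ((hfin j).mem_toFinset.mpr hx)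
    set f : ℕ → ℕ → ℕ := fun n r => M (r + n + 2) + 1 with hf
    set r : ℕ → ℕ := seqAux f with hr
    set K : ℕ → ℕ := fun n => r n + n + 2 with hK
    have hrsucc : ∀ n, r (n + 1) = M (K n) + 1 := fun n => rfl
    -- each block is big
    have hbig : ∀ n, n + 1 ≤ (X (K n) ∩ Set.Ioi (r n)).ncard := by
      intro n
      have h1 : X (K n) = (X (K n) ∩ Set.Iic (r n)) ∪ (X (K n) ∩ Set.Ioi (r n)) := by
        rw [← Set.inter_union_distrib_left, Set.Iic_union_Ioi, Set.inter_univ]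
      have h2 : (X (K n)).ncard ≤
          (X (K n) ∩ Set.Iic (r n)).ncard + (X (K n) ∩ Set.Ioi (r n)).ncard := by
        conv_lhs => rw [h1]
        exact Set.ncard_union_le _ _
      have h3 : (X (K n) ∩ Set.Iic (r n)).ncard ≤ r n + 1 := by
        have hle := Set.ncard_le_ncard (Set.inter_subset_right
          (s := X (K n)) (t := Set.Iic (r n))) (Set.finite_Iic (r n))
        have : (Set.Iic (r n)).ncard = r n + 1 := by
          rw [← Finset.coe_Iic, Set.ncard_coe_finset, Nat.card_Iic]
        omega
      have h4 := hcard (K n)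
      have hKn : K n = r n + n + 2 := rfl
      omega
    have hlt : ∀ n, r n < r (n + 1) := by
      intro n
      have hne : (X (K n) ∩ Set.Ioi (r n)).Nonempty := by
        rw [← Set.ncard_pos ((hfin _).inter_of_left _)]
        have := hbig n; omega
      obtain ⟨x, hxX, hxgt⟩ := hne
      have := hMle (K n) x hxX
      have h5 := hrsucc n
      simp only [Set.mem_Ioi] at hxgt
      omega
    have hmono : StrictMono r := strictMono_nat_of_lt_succ hlt
    have hub : ∀ n, ∀ x ∈ X (K n), x < r (n + 1) := by
      intro n x hx
      have := hMle (K n) x hx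
      have := hrsucc n
      omega
    -- define R and I
    set R : Set ℕ := Set.range r with hR
    set I : Set ℕ := ⋃ n, X (K n) ∩ Set.Ioo (r n) (r (n + 1)) with hI
    -- consecutive elements of R are exactly (r n, r (n+1))
    have hcons : ∀ a b, ConsecutiveIn R a b ↔ ∃ n, a = r n ∧ b = r (n + 1) := by
      intro a b
      constructor
      · rintro ⟨⟨n, rfl⟩, ⟨m, rfl⟩, hab, hno⟩
        have hnm : n < m := hmono.lt_iff_lt.mp hab
        rcases eq_or_lt_of_le (Nat.succ_le_of_lt hnm) with heq | hlt'
        · exact ⟨n, rfl, by rw [← heq]⟩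
        · exact ((hno (r (n + 1)) ⟨n + 1, rfl⟩
            ⟨hmono (Nat.lt_succ_self n), hmono hlt'⟩)).elim
      · rintro ⟨n, rfl, rfl⟩
        refine ⟨⟨n, rfl⟩, ⟨n + 1, rfl⟩, hlt n, ?_⟩
        rintro x ⟨m, rfl⟩ ⟨h1, h2⟩
        have := hmono.lt_iff_lt.mp h1
        have := hmono.lt_iff_lt.mp h2
        omega
    -- block isolation
    have hiso : ∀ n, {x ∈ I | r n < x ∧ x < r (n + 1)} = X (K n) ∩ Set.Ioi (r n) := by
      intro n
      ext x
      simp only [Set.mem_setOf_eq, hI, Set.mem_iUnion, Set.mem_inter_iff, Set.mem_Ioo,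
        Set.mem_Ioi]
      constructor
      · rintro ⟨⟨m, hxX, hm1, hm2⟩, hx1, hx2⟩
        rcases lt_trichotomy m n with hlt' | rfl | hgt'
        · have : r (m + 1) ≤ r n := hmono.monotone (by omega)
          omega
        · exact ⟨hxX, hx1⟩
        · have : r (n + 1) ≤ r m := hmono.monotone (by omega)
          omega
      · rintro ⟨hxX, hx1⟩
        have hx2 := hub n x hxX
        exact ⟨⟨n, hxX, hx1, hx2⟩, hx1, hx2⟩
    refine ⟨R, I, ⟨?_, ?_, ?_⟩, ?_⟩
    · exact Set.infinite_range_of_injective hmono.injective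
    · ext x
      simp only [Set.mem_inter_iff, Set.mem_empty_iff_false, iff_false, not_and]
      rintro ⟨m, rfl⟩ hxI
      simp only [hI, Set.mem_iUnion, Set.mem_inter_iff, Set.mem_Ioo] at hxI
      obtain ⟨n, _, h1, h2⟩ := hxI
      have := hmono.lt_iff_lt.mp h1
      have := hmono.lt_iff_lt.mp h2
      omega
    · intro k
      refine ⟨r k, r (k + 1), (hcons _ _).mpr ⟨k, rfl, rfl⟩, ?_⟩
      rw [hiso k]
      have := hbig k; omega
    · intro a b hab
      obtain ⟨n, rfl, rfl⟩ := (hcons _ _).mp hab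
      refine ⟨X (K n), hfin _, hφ _, ?_⟩
      intro x hxI hx1 hx2
      have : x ∈ {x ∈ I | r n < x ∧ x < r (n + 1)} := ⟨hxI, hx1, hx2⟩
      rw [hiso n] at this
      exact this.1
  · rintro ⟨R, I, ⟨_, _, hgap⟩, hX⟩ k
    obtain ⟨a, b, hab, hk⟩ := hgap k
    obtain ⟨Y, hYfin, hYφ, hYsub⟩ := hX a b hab
    refine ⟨Y, hYfin, ?_, hYφ⟩
    calc k ≤ {x ∈ I | a < x ∧ x < b}.ncard := hk
      _ ≤ Y.ncard := Set.ncard_le_ncard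
            (fun x hx => hYsub x hx.1 hx.2.1 hx.2.2) hYfin
end

section
/- Let v be a vector sequence. Then dim v is unbounded if and only if at least one of the following holds: (1) there exists a sub-extraction w of v such that w tends to infinity and dim w is unbounded; (2) there exists an interval-closed sub-extraction w of v such that w is bounded and dim w is unbounded. -/
/-- `dim v` is unbounded. -/
def DimUnbounded (v : ℕ → List ℕ) : Prop :=
  ∀ k : ℕ, ∃ i, k ≤ (v i).length

/-- `v` tends to infinity: each value occurs as a coordinate in finitely many vectors. -/
def TendsToInfinity (v : ℕ → List ℕ) : Prop :=
  ∀ n : ℕ, {i | n ∈ v i}.Finite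

/-- `w` is a sub-extraction of `v`: an extraction of a sub-sequence of `v`. -/
def SubExtraction (v w : ℕ → List ℕ) : Prop :=
  ∃ σ : ℕ → ℕ, StrictMono σ ∧ ∀ i, (w i).Sublist (v (σ i)) ∧ w i ≠ []

/-- `w` is an interval-closed sub-extraction of `v`: each vector of `w` is a nonempty
contiguous (infix) sublist of the corresponding vector of a sub-sequence of `v`. -/
def IntervalClosedSubExtraction (v w : ℕ → List ℕ) : Prop :=
  ∃ σ : ℕ → ℕ, StrictMono σ ∧ ∀ i, (w i) <:+: (v (σ i)) ∧ w i ≠ []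

/-- All coordinates of `w` are bounded by a common bound. -/
def BoundedVecSeq (w : ℕ → List ℕ) : Prop :=
  ∃ B : ℕ, ∀ i, ∀ x ∈ w i, x ≤ B


lemma filter_count_lower (m K : ℕ) : ∀ n (l : List ℕ), l.length ≤ n →
    (∀ t : List ℕ, t <:+: l → (∀ x ∈ t, x ≤ m) → t.length < K) →
    l.length < ((l.filter (fun x => decide (m < x))).length + 1) * K := by
  intro n
  induction n with
  | zero =>
    intro l hl h
    have hK : 0 < K := h [] List.nil_infix (by simp)
    have h0 : l.length = 0 := Nat.le_zero.mp hl
    calc l.length = 0 := h0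
      _ < K := hK
      _ ≤ ((l.filter (fun x => decide (m < x))).length + 1) * K :=
          Nat.le_mul_of_pos_left K (Nat.succ_pos _)
  | succ n ih =>
    intro l hl h
    have hK : 0 < K := h [] List.nil_infix (by simp)
    set q : ℕ → Bool := fun x => decide (x ≤ m) with hq
    have hsplit : l.takeWhile q ++ l.dropWhile q = l := List.takeWhile_append_dropWhile (p := q) (l := l)
    have hlen_eq : l.length = (l.takeWhile q).length + (l.dropWhile q).length := by
      rw [← List.length_append, hsplit]
    have hpmem : ∀ x ∈ l.takeWhile q, x ≤ m := by
      intro x hx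
      have := List.mem_takeWhile_imp hx
      simpa [hq] using this
    have hplen : (l.takeWhile q).length < K :=
      h _ (List.IsPrefix.isInfix (List.takeWhile_prefix q)) hpmem
    have hpfilter : (l.takeWhile q).filter (fun x => decide (m < x)) = [] := by
      rw [List.filter_eq_nil_iff]
      intro x hx
      have := hpmem x hx
      simp [Nat.not_lt.mpr this]
    cases hd : l.dropWhile q with
    | nil =>
      have h1 : l.length < K := by rw [hlen_eq, hd]; simpa using hplen
      calc l.length < K := h1
        _ ≤ _ := Nat.le_mul_of_pos_left K (Nat.succ_pos _)
    | cons a d' =>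
      have ha : q a = false := by
        have := List.head_dropWhile_not q (show l.dropWhile q ≠ [] by simp [hd])
        simpa [hd] using this
      have ham : m < a := by
        simp only [hq, decide_eq_false_iff_not, Nat.not_le] at ha
        exact ha
      have hd'suffix : d' <:+ l := by
        have h1 : l.dropWhile q <:+ l := List.dropWhile_suffix q
        rw [hd] at h1
        exact (List.suffix_cons a d').trans h1
      have hlen : l.length = (l.takeWhile q).length + 1 + d'.length := by
        rw [hlen_eq, hd]; simp; omega
      have hd'len : d'.length ≤ n := by omega
      have hih := ih d' hd'len (fun t ht hts => h t (ht.trans hd'suffix.isInfix) hts)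
      have hfilter : l.filter (fun x => decide (m < x)) =
          a :: d'.filter (fun x => decide (m < x)) := by
        conv_lhs => rw [← hsplit]
        rw [List.filter_append, hpfilter, List.nil_append, hd, List.filter_cons]
        simp [ham]
      rw [hfilter]
      simp only [List.length_cons]
      have h2 : l.length ≤ K + d'.length := by omega
      calc l.length ≤ K + d'.length := h2
        _ < K + ((d'.filter (fun x => decide (m < x))).length + 1) * K := by omega
        _ = ((d'.filter (fun x => decide (m < x))).length + 1 + 1) * K := by ring

lemma exists_strictMono_of_cofinal (P : ℕ → ℕ → Prop) (h : ∀ m N, ∃ i, N ≤ i ∧ P m i) :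
    ∃ g : ℕ → ℕ, StrictMono g ∧ ∀ m, P m (g m) := by
  choose f hf1 hf2 using h
  let g : ℕ → ℕ := fun m => Nat.rec (f 0 0) (fun n gn => f (n + 1) (gn + 1)) m
  have hsucc : ∀ n, g (n + 1) = f (n + 1) (g n + 1) := fun n => rfl
  refine ⟨g, strictMono_nat_of_lt_succ ?_, ?_⟩
  · intro n
    have := hf1 (n + 1) (g n + 1)
    rw [hsucc]
    omega
  · intro m
    cases m with
    | zero => exact hf2 0 0
    | succ n => rw [hsucc]; exact hf2 (n + 1) (g n + 1)

theorem stmt1 (v : ℕ → List ℕ) :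
    DimUnbounded v ↔
      ((∃ w : ℕ → List ℕ, SubExtraction v w ∧ TendsToInfinity w ∧ DimUnbounded w) ∨
        (∃ w : ℕ → List ℕ, IntervalClosedSubExtraction v w ∧ BoundedVecSeq w ∧
          DimUnbounded w)) := by
  constructor
  · intro hv
    by_cases h : ∀ B : ℕ, ∃ K : ℕ, ∀ i, ∀ t : List ℕ, t <:+: v i → (∀ x ∈ t, x ≤ B) →
        t.length < K
    · -- tends-to-infinity case
      left
      have hcof : ∀ m N : ℕ, ∃ i, N ≤ i ∧
          m + 1 ≤ ((v i).filter (fun x => decide (m < x))).length := by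
        intro m N
        obtain ⟨K, hK⟩ := h m
        have hK0 : 0 < K := hK 0 [] List.nil_infix (by simp)
        obtain ⟨i, hi⟩ := hv ((m + 2) * K + (Finset.range N).sup (fun j => (v j).length) + 1)
        have hiN : N ≤ i := by
          by_contra hc
          have hle : (v i).length ≤ (Finset.range N).sup (fun j => (v j).length) :=
            Finset.le_sup (f := fun j => (v j).length) (b := i) (Finset.mem_range.mpr (by omega))
          omega
        refine ⟨i, hiN, ?_⟩
        have hlt := filter_count_lower m K (v i).length (v i) le_rfl (hK i)
        set c := ((v i).filter (fun x => decide (m < x))).length with hc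
        have h1 : (m + 2) * K < (c + 1) * K := by omega
        have h2 : m + 2 < c + 1 := Nat.lt_of_mul_lt_mul_right h1
        omega
      obtain ⟨g, hg, hgP⟩ := exists_strictMono_of_cofinal _ hcof
      refine ⟨fun m => (v (g m)).filter (fun x => decide (m < x)), ⟨g, hg, ?_⟩, ?_, ?_⟩
      · intro i
        refine ⟨List.filter_sublist, ?_⟩
        intro heq
        replace heq : (v (g i)).filter (fun x => decide (i < x)) = [] := heq
        have := hgP i
        rw [heq] at this
        simp at this
      · intro n
        apply Set.Finite.subset (Set.finite_Iio n)
        intro i hi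
        simp only [Set.mem_setOf_eq, List.mem_filter] at hi
        have := hi.2
        simp only [decide_eq_true_eq] at this
        exact this
      · intro k
        exact ⟨k, le_trans (by omega) (hgP k)⟩
    · -- bounded case
      right
      push_neg at h
      obtain ⟨B, hB⟩ := h
      have hcof : ∀ m N : ℕ, ∃ i, N ≤ i ∧
          ∃ t : List ℕ, t <:+: v i ∧ (∀ x ∈ t, x ≤ B) ∧ m + 1 ≤ t.length := by
        intro m N
        obtain ⟨i, t, hti, htB, htlen⟩ :=
          hB ((Finset.range N).sup (fun j => (v j).length) + m + 2)
        have hle : t.length ≤ (v i).length := hti.sublist.length_le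
        have hiN : N ≤ i := by
          by_contra hc
          have hle2 : (v i).length ≤ (Finset.range N).sup (fun j => (v j).length) :=
            Finset.le_sup (f := fun j => (v j).length) (b := i) (Finset.mem_range.mpr (by omega))
          omega
        exact ⟨i, hiN, t, hti, htB, by omega⟩
      obtain ⟨g, hg, hgP⟩ := exists_strictMono_of_cofinal _ hcof
      choose t ht1 ht2 ht3 using hgP
      refine ⟨t, ⟨g, hg, ?_⟩, ⟨B, ht2⟩, ?_⟩
      · intro i
        refine ⟨ht1 i, ?_⟩
        intro heq
        have := ht3 i
        rw [heq] at this
        simp at this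
      · intro k
        exact ⟨k, le_trans (by omega) (ht3 k)⟩
  · rintro (⟨w, ⟨σ, hσ, hw⟩, _, hdim⟩ | ⟨w, ⟨σ, hσ, hw⟩, _, hdim⟩) k
    · obtain ⟨i, hi⟩ := hdim k
      exact ⟨σ i, le_trans hi (hw i).1.length_le⟩
    · obtain ⟨i, hi⟩ := hdim k
      exact ⟨σ i, le_trans hi (hw i).1.sublist.length_le⟩
end

section
/- Let v be a vector sequence all of whose coordinates are positive and which tends to infinity. Then dim v is unbounded if and only if there exist a sub-sequence h of v and a strict extraction g of h such that for every vector sequence h' dominated by h there exists a vector sequence g' dominated by g such that h' is an asymptotic mix of g'. -/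
namespace Stmt2Aux

def zeroPre : ℕ → ℕ → ℕ
  | 0, _ => 0
  | t + 1, j => Nat.pair j.unpair.1 (zeroPre t j.unpair.2)

def embOf : List ℕ → ℕ → ℕ
  | [], x => x
  | m :: ms, x => Nat.pair m (embOf ms x)

theorem embOf_strictMono (ms : List ℕ) : StrictMono (embOf ms) := by
  induction ms with
  | nil => exact strictMono_id
  | cons m ms ih => exact fun a b h => Nat.pair_lt_pair_right m (ih h)

theorem zeroPre_embOf (ms : List ℕ) (x : ℕ) :
    zeroPre ms.length (embOf ms x) = embOf ms 0 := by
  induction ms generalizing x with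
  | nil => rfl
  | cons m ms ih => simp [zeroPre, embOf, Nat.unpair_pair, ih]

theorem embOf_append (ms : List ℕ) (m x : ℕ) :
    embOf (ms ++ [m]) x = embOf ms (Nat.pair m x) := by
  induction ms with
  | nil => rfl
  | cons m' ms ih => simp [embOf, ih]

theorem le_embOf (ms : List ℕ) (x : ℕ) : x ≤ embOf ms x :=
  (embOf_strictMono ms).le_apply

end Stmt2Aux



/-- `a` is a 1-extraction of `v`: for every `i`, `a i` is a coordinate of `v i`. -/
def OneExtraction (v : ℕ → List ℕ) (a : ℕ → ℕ) : Prop :=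
  ∀ i, a i ∈ v i

/-- `a` is bounded on `S`. -/
def BoundedOn (a : ℕ → ℕ) (S : Set ℕ) : Prop :=
  ∃ B : ℕ, ∀ i ∈ S, a i ≤ B

/-- `a` and `b` are asymptotically equivalent. -/
def AsympEquiv (a b : ℕ → ℕ) : Prop :=
  ∀ S : Set ℕ, BoundedOn a S ↔ BoundedOn b S

/-- `u` is an asymptotic mix of `w`. -/
def AsympMix (u w : ℕ → List ℕ) : Prop :=
  ∀ a : ℕ → ℕ, OneExtraction u a → ∃ b : ℕ → ℕ, OneExtraction w b ∧ AsympEquiv a b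

/-- `w` dominates `u`: pointwise the lists have equal lengths, `u i` is coordinatewise
at most `w i`, and all coordinates of both are positive. -/
def Dominates (w u : ℕ → List ℕ) : Prop :=
  ∀ i, List.Forall₂ (· ≤ ·) (u i) (w i) ∧ (∀ x ∈ u i, 0 < x) ∧ (∀ x ∈ w i, 0 < x)

open Stmt2Aux in
theorem stmt2 (v : ℕ → List ℕ)
    (hpos : ∀ i, ∀ x ∈ v i, 0 < x)
    (hinf : TendsToInfinity v) :
    DimUnbounded v ↔
      ∃ σ : ℕ → ℕ, StrictMono σ ∧
        ∃ g : ℕ → List ℕ,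
          (∀ i, (g i).Sublist (v (σ i)) ∧ g i ≠ [] ∧ (g i).length < (v (σ i)).length) ∧
          ∀ h' : ℕ → List ℕ, Dominates (fun i => v (σ i)) h' →
            ∃ g' : ℕ → List ℕ, Dominates g g' ∧ AsympMix h' g' := by
  constructor
  · intro hdim
    classical
    have hlen_inf : ∀ k : ℕ, {i | k ≤ (v i).length}.Infinite := by
      intro k
      by_contra hfin
      rw [Set.not_infinite] at hfin
      obtain ⟨i, hi⟩ := hdim (max k ((hfin.toFinset.sup fun i => (v i).length) + 1))
      have hik : k ≤ (v i).length := le_trans (le_max_left _ _) hi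
      have hmem : i ∈ hfin.toFinset := by simpa using hik
      have h1 : (v i).length ≤ hfin.toFinset.sup fun i => (v i).length := Finset.le_sup (f := fun i => (v i).length) hmem
      have h2 := le_trans (le_max_right k _) hi
      omega
    have hbad : ∀ m : ℕ, {i | ∃ x ∈ v i, x ≤ m}.Finite := by
      intro m
      refine Set.Finite.subset (Set.Finite.biUnion (Finset.range (m+1)).finite_toSet
        (fun n _ => hinf n)) ?_
      rintro i ⟨x, hx, hxm⟩
      exact Set.mem_biUnion (Finset.mem_range.2 (Nat.lt_succ_of_le hxm)) hx
    have step : ∀ N k m : ℕ, ∃ i, N < i ∧ k ≤ (v i).length ∧ ∀ x ∈ v i, m < x := by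
      intro N k m
      have hinf2 : ({i | k ≤ (v i).length} \ ({i | ∃ x ∈ v i, x ≤ m} ∪ {i | i ≤ N})).Infinite :=
        (hlen_inf k).diff ((hbad m).union (Set.finite_le_nat N))
      obtain ⟨i, hi⟩ := hinf2.nonempty
      have h2 := hi.2
      simp only [Set.mem_union, Set.mem_setOf_eq, not_or, not_exists, not_le] at h2
      refine ⟨i, h2.2, hi.1, fun x hx => ?_⟩
      have := h2.1 x
      simp only [hx, true_and, not_le] at this
      exact this
    set σ : ℕ → ℕ := Nat.rec (step 0 2 1).choose (fun n ih => (step ih (n+3) (n+2)).choose) with hσdef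
    have hσs : ∀ n : ℕ, σ n < σ (n+1) ∧ (n+3) ≤ (v (σ (n+1))).length ∧ ∀ x ∈ v (σ (n+1)), n+2 < x :=
      fun n => (step (σ n) (n+3) (n+2)).choose_spec
    have hσ0 : 2 ≤ (v (σ 0)).length ∧ ∀ x ∈ v (σ 0), 1 < x :=
      ⟨(step 0 2 1).choose_spec.2.1, (step 0 2 1).choose_spec.2.2⟩
    have hlen : ∀ i, i + 2 ≤ (v (σ i)).length := by
      intro i
      cases i with
      | zero => exact hσ0.1
      | succ n => exact (hσs n).2.1
    have hcoord : ∀ i, ∀ x ∈ v (σ i), i + 1 < x := by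
      intro i
      cases i with
      | zero => exact hσ0.2
      | succ n => exact (hσs n).2.2
    refine ⟨σ, strictMono_nat_of_lt_succ (fun n => (hσs n).1), fun i => (v (σ i)).drop 1,
      fun i => ⟨List.drop_sublist 1 _, ?_, ?_⟩, ?_⟩
    · have := hlen i
      rw [← List.length_pos_iff, List.length_drop]
      omega
    · rw [List.length_drop]
      have := hlen i
      omega
    · intro h' hdom
      set t : ℕ → List ℕ := fun i => (h' i).map (fun x => min x (i+1)) with ht
      set g' : ℕ → List ℕ :=
        fun i => (t i).dedup ++ List.replicate ((v (σ i)).length - 1 - (t i).dedup.length) 1 with hg'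
      have hlen' : ∀ i, (h' i).length = (v (σ i)).length := fun i => (hdom i).1.length_eq
      have hpos' : ∀ i, ∀ x ∈ h' i, 0 < x := fun i => (hdom i).2.1
      have htval : ∀ i, ∀ x ∈ t i, 1 ≤ x ∧ x ≤ i + 1 := by
        intro i x hx
        rw [ht, List.mem_map] at hx
        obtain ⟨y, hy, rfl⟩ := hx
        exact ⟨le_min (hpos' i y hy) (by omega), min_le_right _ _⟩
      have hdedup : ∀ i, (t i).dedup.length ≤ i + 1 := by
        intro i
        have h1 : (t i).toFinset ⊆ Finset.Icc 1 (i+1) := by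
          intro x hx
          rw [List.mem_toFinset] at hx
          exact Finset.mem_Icc.2 (htval i x hx)
        have h2 := Finset.card_le_card h1
        rw [List.card_toFinset, Nat.card_Icc] at h2
        omega
      have hg'len : ∀ i, (g' i).length = (v (σ i)).length - 1 := by
        intro i
        rw [hg']
        simp only [List.length_append, List.length_replicate]
        have := hdedup i
        have := hlen i
        omega
      have hg'val : ∀ i, ∀ x ∈ g' i, 1 ≤ x ∧ x ≤ i + 1 := by
        intro i x hx
        rw [hg', List.mem_append] at hx
        rcases hx with hx | hx
        · exact htval i x (List.mem_dedup.1 hx)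
        · rw [List.eq_of_mem_replicate hx]
          omega
      refine ⟨g', fun i => ⟨?_, fun x hx => (hg'val i x hx).1, fun x hx => hpos _ x (List.mem_of_mem_drop hx)⟩, ?_⟩
      · rw [List.forall₂_iff_get]
        refine ⟨by rw [hg'len, List.length_drop], fun q h1 h2 => ?_⟩
        have ha : (g' i).get ⟨q, h1⟩ ≤ i + 1 := (hg'val i _ (List.get_mem _ _)).2
        have hb : i + 1 < ((v (σ i)).drop 1).get ⟨q, h2⟩ :=
          hcoord i _ (List.mem_of_mem_drop (List.get_mem _ _))
        show (g' i).get ⟨q, h1⟩ ≤ ((v (σ i)).drop 1).get ⟨q, h2⟩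
        omega
      · intro a ha
        refine ⟨fun i => min (a i) (i+1), fun i => ?_, fun S => ?_⟩
        · have hmem : min (a i) (i+1) ∈ t i := by
            rw [ht]
            exact List.mem_map.2 ⟨a i, ha i, rfl⟩
          rw [hg']
          exact List.mem_append_left _ (List.mem_dedup.2 hmem)
        · constructor
          · rintro ⟨B, hB⟩
            exact ⟨B, fun i hi => le_trans (min_le_left _ _) (hB i hi)⟩
          · rintro ⟨B, hB⟩
            refine ⟨max B ((Finset.range B).sup a), fun i hi => ?_⟩
            rcases lt_or_ge i B with h | h
            · exact le_trans (Finset.le_sup (Finset.mem_range.2 h)) (le_max_right _ _)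
            · have h1 : min (a i) (i+1) ≤ B := hB i hi
              have h2 : a i ≤ B := by omega
              exact le_trans h2 (le_max_left _ _)
  · intro hrhs
    classical
    obtain ⟨σ, hσ, g, hg, hmain⟩ := hrhs
    by_contra hdim
    rw [DimUnbounded] at hdim
    push_neg at hdim
    obtain ⟨k, hk⟩ := hdim
    -- pigeonhole on lengths
    have hLex : ∃ L, {i | (v (σ i)).length = L}.Infinite := by
      by_contra hfin
      push_neg at hfin
      have huniv : (Set.univ : Set ℕ) ⊆ ⋃ L ∈ Finset.range k, {i | (v (σ i)).length = L} :=
        fun i _ => Set.mem_biUnion (Finset.mem_range.2 (hk (σ i))) rfl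
      exact Set.infinite_univ (Set.Finite.subset
        (Set.Finite.biUnion (Finset.range k).finite_toSet
          (fun L _ => hfin L)) huniv)
    obtain ⟨L, hT⟩ := hLex
    set p : ℕ → Prop := fun i => (v (σ i)).length = L with hp
    have hT' : (setOf p).Infinite := hT
    set e : ℕ → ℕ := Nat.nth p with he
    have hmem : ∀ j, (v (σ (e j))).length = L := fun j => Nat.nth_mem_of_infinite hT' j
    have hcount : ∀ j, Nat.count p (e j) = j := fun j => Nat.count_nth_of_infinite hT' j
    have heinj : Function.Injective e := fun x y hxy => by
      have := hcount x; rw [hxy, hcount y] at this; omega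
    have hn2 : ∀ i, 2 ≤ (v (σ i)).length := by
      intro i
      have h1 := (hg i).2.1
      have h2 := (hg i).2.2
      have h3 : 0 < (g i).length := List.length_pos_iff.2 h1
      omega
    have hL2 : 2 ≤ L := by
      obtain ⟨i0, hi0⟩ := hT.nonempty
      have := hn2 i0
      rw [Set.mem_setOf_eq] at hi0
      omega
    -- scale functions
    set Sf : ℕ → ℕ → ℕ := fun c j => if c + 2 ≤ L then zeroPre c j + 1 else j + 1 with hSf
    have hSfpos : ∀ c j, 1 ≤ Sf c j := by
      intro c j
      rw [hSf]
      dsimp only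
      split <;> omega
    -- the adversarial dominated sequence
    set h' : ℕ → List ℕ :=
      fun i => (v (σ i)).mapIdx (fun c x => if p i then min (Sf c (Nat.count p i)) x else x) with hh'
    have hlenh' : ∀ i, (h' i).length = (v (σ i)).length := by
      intro i; rw [hh']; exact List.length_mapIdx
    have hgeth' : ∀ i (c : ℕ) (hc : c < (h' i).length) (hc' : c < (v (σ i)).length),
        (h' i).get ⟨c, hc⟩ =
          if p i then min (Sf c (Nat.count p i)) ((v (σ i)).get ⟨c, hc'⟩)
          else (v (σ i)).get ⟨c, hc'⟩ := by
      intro i c hc hc'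
      exact List.getElem_mapIdx (h := hc)
    have hdom1 : Dominates (fun i => v (σ i)) h' := by
      intro i
      refine ⟨?_, ?_, fun x hx => hpos _ x hx⟩
      · rw [List.forall₂_iff_get]
        refine ⟨hlenh' i, fun q h1 h2 => ?_⟩
        show (h' i).get ⟨q, h1⟩ ≤ (v (σ i)).get ⟨q, h2⟩
        rw [hgeth' i q h1 h2]
        split
        · exact min_le_right _ _
        · exact le_refl _
      · intro x hx
        obtain ⟨⟨q, hq⟩, rfl⟩ := List.mem_iff_get.1 hx
        have hq' : q < (v (σ i)).length := by rw [← hlenh' i]; exact hq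
        rw [hgeth' i q hq hq']
        have hvx : 0 < (v (σ i)).get ⟨q, hq'⟩ := hpos _ _ (List.get_mem _ _)
        split
        · exact lt_min (hSfpos _ _) hvx
        · exact hvx
    obtain ⟨g', hdom2, hmix⟩ := hmain h' hdom1
    -- the 1-extractions of h'
    set a : ℕ → ℕ → ℕ := fun c i => (h' i).getD (min c ((h' i).length - 1)) 1 with ha
    have halen : ∀ c i, min c ((h' i).length - 1) < (h' i).length := by
      intro c i
      have := hn2 i
      have := hlenh' i
      omega
    have haext : ∀ c, OneExtraction h' (a c) := by
      intro c i
      rw [ha]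
      dsimp only
      rw [List.getD_eq_getElem _ 1 (halen c i)]
      exact List.getElem_mem _
    have hgetDmem : ∀ i c, c < (v (σ i)).length → (v (σ i)).getD c 1 ∈ v (σ i) := by
      intro i c h
      rw [List.getD_eq_getElem _ 1 h]
      exact List.getElem_mem _
    have hacomp : ∀ c j (hc : c < L), a c (e j) =
        min (Sf c j) ((v (σ (e j))).getD c 1) := by
      intro c j hc
      have hpe : p (e j) := hmem j
      have hlen : (h' (e j)).length = L := by rw [hlenh', hmem j]
      have hidx : min c ((h' (e j)).length - 1) = c := by omega
      have hcl : c < (h' (e j)).length := by omega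
      have hcl' : c < (v (σ (e j))).length := by rw [hmem j]; exact hc
      have hgg : (h' (e j)).getD c 1 = (h' (e j)).get ⟨c, hcl⟩ := by
        rw [List.getD_eq_getElem _ 1 hcl, List.get_eq_getElem]
      have hgd : (v (σ (e j))).get ⟨c, hcl'⟩ = (v (σ (e j))).getD c 1 := by
        rw [List.getD_eq_getElem _ 1 hcl', List.get_eq_getElem]
      rw [ha]
      dsimp only
      rw [hidx, hgg, hgeth' _ c hcl hcl', if_pos hpe, hcount j, hgd]
    -- coordinates are small only finitely often
    have hcoordfin : ∀ M, {i | ∃ x ∈ v (σ i), x ≤ M}.Finite := by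
      intro M
      refine Set.Finite.subset (Set.Finite.biUnion (Finset.range (M+1)).finite_toSet
        (fun n _ => Set.Finite.preimage (hσ.injective.injOn) (hinf n))) ?_
      rintro i ⟨x, hx, hxM⟩
      exact Set.mem_biUnion (Finset.mem_range.2 (Nat.lt_succ_of_le hxM)) hx
    have hbex : ∀ c, ∃ b, OneExtraction g' b ∧ AsympEquiv (a c) b := fun c => hmix (a c) (haext c)
    choose b hbext hbeq using hbex
    have htrans : ∀ c (S : Set ℕ) (B : ℕ), (∀ i ∈ S, b c i ≤ B) → ∃ M, ∀ i ∈ S, a c i ≤ M :=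
      fun c S B hB => (hbeq c S).2 ⟨B, hB⟩
    have htrans' : ∀ c (S : Set ℕ) (B : ℕ), (∀ i ∈ S, a c i ≤ B) → ∃ M, ∀ i ∈ S, b c i ≤ M :=
      fun c S B hB => (hbeq c S).1 ⟨B, hB⟩
    -- main chain induction
    have KEY : ∀ t, t + 2 ≤ L → ∃ (ms : List ℕ) (B : ℕ) (F : Set ℕ), ms.length = t ∧ F.Finite ∧
        (∀ x, x ∉ F → ∀ c, c ≤ t → b c (e (embOf ms x)) ≤ B) ∧
        (∀ x, x ∉ F → ∀ c c', c < c' → c' ≤ t →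
          b c (e (embOf ms x)) ≠ b c' (e (embOf ms x))) := by
      intro t
      induction t with
      | zero =>
        intro h2
        have h0 : ∀ i ∈ Set.range e, a 0 i ≤ 1 := by
          rintro i ⟨j, rfl⟩
          rw [hacomp 0 j (by omega)]
          refine le_trans (min_le_left _ _) ?_
          rw [hSf]
          dsimp only
          rw [if_pos (by omega : 0 + 2 ≤ L)]
          rfl
        obtain ⟨B, hB⟩ := htrans' 0 (Set.range e) 1 h0
        refine ⟨[], B, ∅, rfl, Set.finite_empty, ?_, ?_⟩
        · intro x _ c hc
          interval_cases c
          exact hB _ ⟨x, rfl⟩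
        · intro x _ c c' h1 h2'
          omega
      | succ t ih =>
        intro ht2
        obtain ⟨ms, B, F, hms, hF, hband, hdist⟩ := ih (by omega)
        set Ssm : Set ℕ := {i | p i ∧ b (t+1) i ≤ B} with hSsm
        obtain ⟨M, hM⟩ := htrans (t+1) Ssm B (fun i hi => hi.2)
        set m := M + 1 with hm
        set ms' := ms ++ [m] with hms'
        have hms'len : ms'.length = t + 1 := by rw [hms', List.length_append, hms]; rfl
        have hval : ∀ x, zeroPre (t+1) (embOf ms' x) = embOf ms' 0 := by
          intro x
          rw [← hms'len]
          exact zeroPre_embOf ms' x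
        have hVbig : M < embOf ms' 0 := by
          have h1 : m ≤ embOf ms' 0 := by
            rw [hms', embOf_append]
            exact le_trans (Nat.left_le_pair m 0) (le_embOf ms _)
          omega
        have hSfval : ∀ x, Sf (t+1) (embOf ms' x) = embOf ms' 0 + 1 := by
          intro x
          rw [hSf]
          dsimp only
          rw [if_pos (by omega : t + 1 + 2 ≤ L), hval x]
        have hablock : ∀ i ∈ e '' (Set.range (embOf ms')), a (t+1) i ≤ embOf ms' 0 + 1 := by
          rintro i ⟨j, ⟨x, rfl⟩, rfl⟩
          rw [hacomp (t+1) _ (by omega)]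
          exact le_trans (min_le_left _ _) (le_of_eq (hSfval x))
        obtain ⟨Bb, hBb⟩ := htrans' (t+1) _ _ hablock
        set B' := max B Bb with hB'
        set F' : Set ℕ := {x | Nat.pair m x ∈ F} ∪
          (embOf ms' ⁻¹' (e ⁻¹' {i | ∃ y ∈ v (σ i), y ≤ M})) with hF'
        have hF'fin : F'.Finite := by
          apply Set.Finite.union
          · have hpairinj : Function.Injective (Nat.pair m) := by
              intro x y hxy
              have := congrArg (fun z => z.unpair.2) hxy
              simpa [Nat.unpair_pair] using this
            exact Set.Finite.preimage (hpairinj.injOn) hF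
          · exact Set.Finite.preimage ((embOf_strictMono ms').injective.injOn)
              (Set.Finite.preimage (heinj.injOn) (hcoordfin M))
        have hptw : ∀ x, x ∉ F' → B < b (t+1) (e (embOf ms' x)) := by
          intro x hx
          by_contra hle
          push_neg at hle
          have hin : e (embOf ms' x) ∈ Ssm := ⟨hmem _, hle⟩
          have hM' := hM _ hin
          rw [hacomp (t+1) _ (by omega), hSfval x] at hM'
          have hcoord_le : (v (σ (e (embOf ms' x)))).getD (t+1) 1 ≤ M := by omega
          exact hx (Or.inr ⟨_, hgetDmem _ _ (by rw [hmem]; omega), hcoord_le⟩)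
        have hrw : ∀ x, embOf ms' x = embOf ms (Nat.pair m x) := fun x => by
          rw [hms', embOf_append]
        refine ⟨ms', B', F', hms'len, hF'fin, ?_, ?_⟩
        · intro x hx c hc
          rcases Nat.lt_succ_iff_lt_or_eq.1 (Nat.lt_succ_of_le hc) with h | h
          · have hxF : Nat.pair m x ∉ F := fun hc' => hx (Or.inl hc')
            have := hband (Nat.pair m x) hxF c (by omega)
            rw [← hrw x] at this
            exact le_trans this (le_max_left _ _)
          · subst h
            exact le_trans (hBb _ ⟨embOf ms' x, ⟨x, rfl⟩, rfl⟩) (le_max_right _ _)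
        · intro x hx c c' hcc' hc'
          rcases Nat.lt_succ_iff_lt_or_eq.1 (Nat.lt_succ_of_le hc') with h | h
          · have hxF : Nat.pair m x ∉ F := fun hc'' => hx (Or.inl hc'')
            have := hdist (Nat.pair m x) hxF c c' hcc' (by omega)
            rw [← hrw x] at this
            exact this
          · subst h
            have h1 : b c (e (embOf ms' x)) ≤ B := by
              have hxF : Nat.pair m x ∉ F := fun hc'' => hx (Or.inl hc'')
              have := hband (Nat.pair m x) hxF c (by omega)
              rw [← hrw x] at this
              exact this
            exact ne_of_lt (lt_of_le_of_lt h1 (hptw x hx))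
    -- top level
    obtain ⟨ms, B, F, hms, hF, hband, hdist⟩ := KEY (L-2) (by omega)
    set Stp : Set ℕ := {i | p i ∧ b (L-1) i ≤ B} with hStp
    obtain ⟨M, hM⟩ := htrans (L-1) Stp B (fun i hi => hi.2)
    set Ftp : Set ℕ := {x | x ≤ M} ∪
      (embOf ms ⁻¹' (e ⁻¹' {i | ∃ y ∈ v (σ i), y ≤ M})) with hFtp
    have hFtpfin : Ftp.Finite := by
      apply Set.Finite.union
      · exact Set.finite_le_nat M
      · exact Set.Finite.preimage ((embOf_strictMono ms).injective.injOn)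
          (Set.Finite.preimage (heinj.injOn) (hcoordfin M))
    obtain ⟨x, hx⟩ := ((hF.union hFtpfin).infinite_compl).nonempty
    rw [Set.mem_compl_iff, Set.mem_union] at hx
    push_neg at hx
    obtain ⟨hxF, hxFtp⟩ := hx
    have hSfL : Sf (L-1) (embOf ms x) = embOf ms x + 1 := by
      rw [hSf]
      dsimp only
      rw [if_neg (by omega : ¬ (L - 1 + 2 ≤ L))]
    have hbtop : B < b (L-1) (e (embOf ms x)) := by
      by_contra hle
      push_neg at hle
      have hM' := hM _ ⟨hmem _, hle⟩
      rw [hacomp (L-1) _ (by omega), hSfL] at hM'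
      have hxM : M < x := by
        by_contra hle2
        push_neg at hle2
        exact hxFtp (Or.inl hle2)
      have hjM : M < embOf ms x := lt_of_lt_of_le hxM (le_embOf ms x)
      have hcoord_le : (v (σ (e (embOf ms x)))).getD (L-1) 1 ≤ M := by omega
      exact hxFtp (Or.inr ⟨_, hgetDmem _ _ (by rw [hmem]; omega), hcoord_le⟩)
    have hdistinct : ∀ c c', c < c' → c' < L →
        b c (e (embOf ms x)) ≠ b c' (e (embOf ms x)) := by
      intro c c' h1 h2
      rcases Nat.lt_or_ge c' (L-1) with h | h
      · exact hdist x hxF c c' h1 (by omega)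
      · have hc' : c' = L - 1 := by omega
        subst hc'
        have hb1 : b c (e (embOf ms x)) ≤ B := hband x hxF c (by omega)
        exact ne_of_lt (lt_of_le_of_lt hb1 hbtop)
    have hcard : (Finset.range L).card ≤ (g' (e (embOf ms x))).toFinset.card := by
      apply Finset.card_le_card_of_injOn (fun c => b c (e (embOf ms x)))
      · intro c _
        exact List.mem_toFinset.2 (hbext c _)
      · intro c hc c' hc' hbe
        by_contra hne
        rcases lt_or_gt_of_ne hne with h | h
        · exact hdistinct c c' h (Finset.mem_range.1 hc') hbe
        · exact hdistinct c' c h (Finset.mem_range.1 hc) hbe.symm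
    have h1 : (g' (e (embOf ms x))).toFinset.card ≤ (g' (e (embOf ms x))).length :=
      List.toFinset_card_le _
    have h2 : (g' (e (embOf ms x))).length = (g (e (embOf ms x))).length :=
      ((hdom2 _).1).length_eq
    have h3 : (g (e (embOf ms x))).length < L := by
      have := (hg (e (embOf ms x))).2.2
      rw [hmem] at this
      exact this
    rw [Finset.card_range] at hcard
    omega
end

section
/- Let h be a vector sequence such that every coordinate of every h i is positive, (h i).length ≥ 2 for all i, h tends to infinity, and for every m ∈ ℕ only finitely many i satisfy (h i).length ≤ m. Define the vector sequence g' by: g' i is the list of length (h i).length − 1 whose j-th coordinate, for 1 ≤ j ≤ (h i).length − 1, equals min(a_j, j), where a_j denotes the j-th coordinate of h i. Then every vector sequence h' dominated by h is an asymptotic mix of g'. -/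
theorem stmt3 (h : ℕ → List ℕ)
    (hpos : ∀ i, ∀ x ∈ h i, 0 < x)
    (hlen : ∀ i, 2 ≤ (h i).length)
    (hinf : TendsToInfinity h)
    (hdim : ∀ m : ℕ, {i | (h i).length ≤ m}.Finite) :
    ∀ h' : ℕ → List ℕ, Dominates h h' →
      AsympMix h'
        (fun i => List.ofFn (fun j : Fin ((h i).length - 1) =>
          min ((h i).get ⟨j.1, Nat.lt_of_lt_of_le j.2 (Nat.sub_le _ _)⟩) (j.1 + 1))) := by
  intro h' hdom a ha
  have hapos : ∀ i, 0 < a i := fun i => (hdom i).2.1 _ (ha i)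
  set j : ℕ → ℕ := fun i => min (a i - 1) ((h i).length - 2) with hjdef
  have hj : ∀ i, j i < (h i).length - 1 := by
    intro i
    have h2 := hlen i
    have : j i ≤ (h i).length - 2 := min_le_right _ _
    omega
  have hj' : ∀ i, j i < (h i).length := fun i => lt_of_lt_of_le (hj i) (Nat.sub_le _ _)
  refine ⟨fun i => min ((h i).get ⟨j i, hj' i⟩) (j i + 1), ?_, ?_⟩
  · intro i
    simp only [List.mem_ofFn]
    exact ⟨⟨j i, hj i⟩, rfl⟩
  · intro S
    constructor
    · rintro ⟨B, hB⟩
      refine ⟨B, fun i hi => ?_⟩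
      have h1 : j i ≤ a i - 1 := min_le_left _ _
      have h2 := hapos i
      have : j i + 1 ≤ a i := by omega
      exact le_trans (le_trans (min_le_right _ _) this) (hB i hi)
    · rintro ⟨B, hB⟩
      have hF1 : {i | ∃ x ∈ h i, x ≤ B}.Finite := by
        have hsub : {i | ∃ x ∈ h i, x ≤ B} ⊆ ⋃ n ∈ Finset.range (B + 1), {i | n ∈ h i} := by
          intro i hi
          obtain ⟨x, hx, hxB⟩ := hi
          simp only [Set.mem_iUnion, Finset.mem_range]
          exact ⟨x, by omega, hx⟩
        exact Set.Finite.subset (Set.Finite.biUnion (Finset.range (B + 1)).finite_toSet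
          (fun n _ => hinf n)) hsub
      have hF : ({i | ∃ x ∈ h i, x ≤ B} ∪ {i | (h i).length ≤ B + 1}).Finite :=
        hF1.union (hdim (B + 1))
      obtain ⟨B', hB'⟩ := (hF.image a).bddAbove
      refine ⟨max B B', fun i hi => ?_⟩
      by_cases hiF : i ∈ ({i | ∃ x ∈ h i, x ≤ B} ∪ {i | (h i).length ≤ B + 1})
      · exact le_trans (hB' (Set.mem_image_of_mem a hiF)) (le_max_right _ _)
      · simp only [Set.mem_union, Set.mem_setOf_eq, not_or, not_exists, not_and, not_le] at hiF
        have hget : (h i).get ⟨j i, hj' i⟩ ∈ h i := List.get_mem _ _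
        have hgB : B < (h i).get ⟨j i, hj' i⟩ := hiF.1 _ hget
        have hbB : min ((h i).get ⟨j i, hj' i⟩) (j i + 1) ≤ B := hB i hi
        have hjB : j i + 1 ≤ B := by
          rcases min_le_iff.mp hbB with h' | h'
          · omega
          · exact h'
        have hlB : B + 1 < (h i).length := hiF.2
        have hmin : j i = min (a i - 1) ((h i).length - 2) := rfl
        have := hapos i
        omega
end

section
/- Let v be a vector sequence. If for every N ∈ ℕ there exists an index i such that at least N coordinates of v i (counted with multiplicity) are greater than N, then there exists a sub-extraction w of v such that w tends to infinity and dim w is unbounded. -/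
lemma mem_le_foldr_max (l : List ℕ) (x : ℕ) (h : x ∈ l) : x ≤ l.foldr max 0 := by
  induction l with
  | nil => simp at h
  | cons a t ih =>
    rcases List.mem_cons.mp h with h | h
    · simp [h, List.foldr_cons]
    · exact le_trans (ih h) (le_max_right _ _)

noncomputable def stmt4F (v : ℕ → List ℕ)
    (hyp : ∀ N : ℕ, ∃ i, N ≤ (v i).countP (fun x => decide (N < x))) : ℕ → ℕ × ℕ
  | 0 => ⟨Classical.choose (hyp 1), 1⟩
  | k + 1 =>
    let p := stmt4F v hyp k
    let B := 1 + max p.2 (((List.range (p.1 + 1)).map (fun j => (v j).foldr max 0)).foldr max 0)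
    ⟨Classical.choose (hyp B), B⟩

theorem stmt4 (v : ℕ → List ℕ)
    (hyp : ∀ N : ℕ, ∃ i, N ≤ (v i).countP (fun x => decide (N < x))) :
    ∃ w : ℕ → List ℕ, SubExtraction v w ∧ TendsToInfinity w ∧ DimUnbounded w := by
  set F := stmt4F v hyp with hF
  set σ : ℕ → ℕ := fun k => (F k).1 with hσ
  set M : ℕ → ℕ := fun k => (F k).2 with hM
  have hspec : ∀ k, M k ≤ (v (σ k)).countP (fun x => decide (M k < x)) := by
    intro k
    cases k with
    | zero => exact Classical.choose_spec (hyp 1)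
    | succ k => exact Classical.choose_spec (hyp _)
  have hMpos : ∀ k, k + 1 ≤ M k := by
    intro k
    induction k with
    | zero => simp [hM, hF, stmt4F]
    | succ k ih =>
      have : M (k + 1) = 1 + max (M k)
          (((List.range ((σ k) + 1)).map (fun j => (v j).foldr max 0)).foldr max 0) := rfl
      omega
  have hstep : ∀ k, M (k + 1) = 1 + max (M k)
      (((List.range ((σ k) + 1)).map (fun j => (v j).foldr max 0)).foldr max 0) := fun k => rfl
  -- σ is strictly monotone
  have hσmono : StrictMono σ := by
    apply strictMono_nat_of_lt_succ
    intro k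
    by_contra h
    push_neg at h
    -- σ (k+1) ≤ σ k, so all coords of v (σ (k+1)) are < M (k+1)
    have hbound : ∀ x ∈ v (σ (k + 1)), x < M (k + 1) := by
      intro x hx
      have h1 : x ≤ (v (σ (k + 1))).foldr max 0 := mem_le_foldr_max _ _ hx
      have h2 : (v (σ (k + 1))).foldr max 0 ∈
          (List.range ((σ k) + 1)).map (fun j => (v j).foldr max 0) :=
        List.mem_map.mpr ⟨σ (k + 1), List.mem_range.mpr (by omega), rfl⟩
      have h3 := mem_le_foldr_max _ _ h2
      rw [hstep k]
      omega
    have hc := hspec (k + 1)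
    have hzero : (v (σ (k + 1))).countP (fun x => decide (M (k + 1) < x)) = 0 := by
      rw [List.countP_eq_zero]
      intro x hx
      simp only [decide_eq_true_eq]
      exact not_lt.mpr (le_of_lt (hbound x hx))
    have := hMpos (k + 1)
    omega
  refine ⟨fun k => (v (σ k)).filter (fun x => decide (M k < x)), ⟨σ, hσmono, ?_⟩, ?_, ?_⟩
  · intro k
    refine ⟨List.filter_sublist, ?_⟩
    have hlen : ((v (σ k)).filter (fun x => decide (M k < x))).length =
        (v (σ k)).countP (fun x => decide (M k < x)) := List.countP_eq_length_filter.symm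
    have := hspec k
    have := hMpos k
    intro hnil
    replace hnil : (v (σ k)).filter (fun x => decide (M k < x)) = [] := hnil
    rw [hnil] at hlen
    simp at hlen
    omega
  · intro n
    apply Set.Finite.subset (Set.finite_Iio n)
    intro k hk
    simp only [Set.mem_setOf_eq, List.mem_filter, decide_eq_true_eq] at hk
    have := hMpos k
    exact Set.mem_Iio.mpr (by omega)
  · intro k
    refine ⟨k, ?_⟩
    have hlen : ((v (σ k)).filter (fun x => decide (M k < x))).length =
        (v (σ k)).countP (fun x => decide (M k < x)) := List.countP_eq_length_filter.symm
    have := hspec k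
    have := hMpos k
    show k ≤ ((v (σ k)).filter (fun x => decide (M k < x))).length
    omega
end

section
/- Let α be a type, l a finite list over α, p a predicate on α, and m, n ∈ ℕ. Suppose that at most m elements of l (counted with multiplicity) fail to satisfy p, and that every contiguous (infix) sublist of l all of whose elements satisfy p has length at most n. Then the length of l is at most n·(m+1) + m. -/
theorem stmt5 {α : Type*} (l : List α) (p : α → Prop) [DecidablePred p] (m n : ℕ)
    (hcount : l.countP (fun x => decide (¬ p x)) ≤ m)
    (hinfix : ∀ u : List α, u <:+: l → (∀ x ∈ u, p x) → u.length ≤ n) :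
    l.length ≤ n * (m + 1) + m := by
  induction m generalizing l with
  | zero =>
    have hall : ∀ x ∈ l, p x := by
      intro x hx
      by_contra h
      have : 0 < l.countP (fun x => decide (¬ p x)) :=
        List.countP_pos_iff.mpr ⟨x, hx, by simp [h]⟩
      omega
    simpa using hinfix l l.infix_refl hall
  | succ m ih =>
    set q : α → Bool := fun x => decide (p x) with hq
    have hsplit := List.takeWhile_append_dropWhile (p := q) (l := l)
    have htw : ∀ x ∈ l.takeWhile q, p x := by
      intro x hx
      have := List.mem_takeWhile_imp hx
      simpa [hq] using this
    have hlen1 : (l.takeWhile q).length ≤ n :=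
      hinfix _ ⟨[], l.dropWhile q, by simpa using hsplit⟩ htw
    rcases hd : l.dropWhile q with _ | ⟨x, t⟩
    · have hl : l.length = (l.takeWhile q).length + (l.dropWhile q).length := by
        conv_lhs => rw [← hsplit]
        rw [List.length_append]
      rw [hd] at hl
      simp at hl
      nlinarith
    · have hx : ¬ p x := by
        have h2 := List.head_dropWhile_not q (l := l) (by rw [hd]; simp)
        simp only [hd, List.head_cons] at h2
        simp [hq] at h2
        exact h2
      have hsuf : t <:+ l := by
        have h1 : t <:+ l.dropWhile q := by rw [hd]; exact List.suffix_cons x t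
        exact h1.trans (List.dropWhile_suffix q)
      have hcount' : t.countP (fun x => decide (¬ p x)) ≤ m := by
        have h1 : l.countP (fun x => decide (¬ p x)) =
            (l.takeWhile q).countP (fun x => decide (¬ p x)) +
            (l.dropWhile q).countP (fun x => decide (¬ p x)) := by
          conv_lhs => rw [← hsplit]
          rw [List.countP_append]
        rw [hd, List.countP_cons] at h1
        have hdx : (decide ¬ p x) = true := by simp [hx]
        rw [hdx] at h1
        simp only [if_true] at h1
        omega
      have hinfix' : ∀ u : List α, u <:+: t → (∀ x ∈ u, p x) → u.length ≤ n :=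
        fun u hu hup => hinfix u (hu.trans hsuf.isInfix) hup
      have hlen2 := ih t hcount' hinfix'
      have : l.length = (l.takeWhile q).length + 1 + t.length := by
        conv_lhs => rw [← hsplit]
        rw [hd]; simp [List.length_append]; omega
      nlinarith
end

section
/- Let I ⊆ ℕ and define I' = {x ∈ I : it is not the case that x is even and (x+1 ∈ I or (x ≥ 1 and x−1 ∈ I))}. Then: (a) no two consecutive integers both belong to I', i.e., for every x, not both x ∈ I' and x+1 ∈ I'; and (b) for every infinite set R ⊆ ℕ with R ∩ I = ∅, the gap-count sequence of (R, I) is unbounded if and only if the gap-count sequence of (R, I') is unbounded. -/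
theorem stmt6 (I : Set ℕ) :
    let I' : Set ℕ := {x ∈ I | ¬(Even x ∧ (x + 1 ∈ I ∨ (1 ≤ x ∧ x - 1 ∈ I)))}
    (∀ x : ℕ, ¬(x ∈ I' ∧ x + 1 ∈ I')) ∧
      (∀ R : Set ℕ, R.Infinite → R ∩ I = ∅ →
        (GapUnbounded R I ↔ GapUnbounded R I')) := by
  intro I'
  constructor
  · rintro x ⟨⟨hxI, hx⟩, ⟨hx1I, hx1⟩⟩
    rcases Nat.even_or_odd x with he | ho
    · exact hx ⟨he, Or.inl hx1I⟩
    · exact hx1 ⟨ho.add_one, Or.inr ⟨Nat.succ_le_succ (Nat.zero_le x), by simpa using hxI⟩⟩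
  · intro R hRinf hRI
    have hnotI : ∀ x ∈ R, x ∉ I := by
      intro x hxR hxI
      have : x ∈ R ∩ I := ⟨hxR, hxI⟩
      rw [hRI] at this
      exact this
    constructor
    · intro h k
      obtain ⟨r, r', hc, hk⟩ := h (3 * k)
      refine ⟨r, r', hc, ?_⟩
      set A := {x ∈ I | r < x ∧ x < r'} with hA
      set B := {x ∈ I' | r < x ∧ x < r'} with hB
      have hBfin : B.Finite := (Set.finite_Iio r').subset (fun x hx => hx.2.2)
      have hAfin : A.Finite := (Set.finite_Iio r').subset (fun x hx => hx.2.2)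
      have hrI : r ∉ I := hnotI r hc.1
      have hr'I : r' ∉ I := hnotI r' hc.2.1
      have hsub2 : A \ B ⊆ (fun y => y + 1) '' B ∪ (fun y => y - 1) '' B := by
        rintro x ⟨⟨hxI, hxr, hxr'⟩, hxB⟩
        have hxnI' : x ∉ I' := fun hI' => hxB ⟨hI', hxr, hxr'⟩
        have hEC : Even x ∧ (x + 1 ∈ I ∨ (1 ≤ x ∧ x - 1 ∈ I)) := by
          by_contra hcon
          exact hxnI' ⟨hxI, hcon⟩
        obtain ⟨heven, hC⟩ := hEC
        rcases hC with h1 | ⟨h1, h2⟩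
        · -- x+1 ∈ I, odd, so x+1 ∈ B
          refine Or.inr ⟨x + 1, ⟨⟨h1, ?_⟩, ?_, ?_⟩, rfl⟩
          · rintro ⟨he', _⟩
            exact (Nat.even_add_one.mp he') heven
          · omega
          · have : x + 1 ≠ r' := fun hh => hr'I (hh ▸ h1)
            omega
        · -- x-1 ∈ I, odd, so x-1 ∈ B
          refine Or.inl ⟨x - 1, ⟨⟨h2, ?_⟩, ?_, ?_⟩, show x - 1 + 1 = x by omega⟩
          · rintro ⟨he', _⟩
            have hx' : x - 1 + 1 = x := by omega
            rw [← hx'] at heven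
            exact (Nat.even_add_one.mp heven) he'
          · have : x - 1 ≠ r := fun hh => hrI (hh ▸ h2)
            omega
          · omega
      have h1 : (A \ B).ncard ≤ 2 * B.ncard := by
        calc (A \ B).ncard ≤ ((fun y => y + 1) '' B ∪ (fun y => y - 1) '' B).ncard :=
              Set.ncard_le_ncard hsub2 ((hBfin.image _).union (hBfin.image _))
          _ ≤ ((fun y => y + 1) '' B).ncard + ((fun y => y - 1) '' B).ncard :=
              Set.ncard_union_le _ _
          _ ≤ B.ncard + B.ncard :=
              Nat.add_le_add (Set.ncard_image_le hBfin) (Set.ncard_image_le hBfin)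
          _ = 2 * B.ncard := by ring
      have h2 : A.ncard ≤ (A \ B).ncard + B.ncard := by
        calc A.ncard ≤ ((A \ B) ∪ B).ncard :=
              Set.ncard_le_ncard (fun x hx => by
                by_cases hxB : x ∈ B
                · exact Or.inr hxB
                · exact Or.inl ⟨hx, hxB⟩) (((hAfin.diff : (A \ B).Finite)).union hBfin)
          _ ≤ (A \ B).ncard + B.ncard := Set.ncard_union_le _ _
      omega
    · intro h k
      obtain ⟨r, r', hc, hk⟩ := h k
      refine ⟨r, r', hc, ?_⟩
      have hAfin : ({x ∈ I | r < x ∧ x < r'} : Set ℕ).Finite :=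
        (Set.finite_Iio r').subset (fun x hx => hx.2.2)
      exact hk.trans (Set.ncard_le_ncard (fun x hx => ⟨hx.1.1, hx.2⟩) hAfin)
end

section
/- Let a : ℕ → ℕ and let s : ℕ → ℕ be strictly increasing with s(i+1) > s(i) + a(i) for all i. Then the following are equivalent: (i) for every m ∈ ℕ, only finitely many i satisfy a(i) ≤ m; (ii) for every infinite set Y ⊆ ℕ for which there exists k ≥ 1 such that every y ∈ Y has some y' ∈ Y with y < y' ≤ y + k, for all but finitely many i the interval {n : s(i) ≤ n < s(i) + a(i)} contains at least two elements of Y. -/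
lemma next_elem {Y : Set ℕ} {k y0 : ℕ} (hy0 : y0 ∈ Y)
    (hkgap : ∀ y ∈ Y, ∃ y' ∈ Y, y < y' ∧ y' ≤ y + k) {n : ℕ} (hn : y0 ≤ n) :
    ∃ y ∈ Y, n < y ∧ y ≤ n + k := by
  have hF : (Y ∩ Set.Iic n).Finite := (Set.finite_Iic n).inter_of_right _
  have hne : (Y ∩ Set.Iic n).Nonempty := ⟨y0, hy0, hn⟩
  obtain ⟨y, ⟨hyY, hyn⟩, hmax⟩ := Set.exists_max_image _ id hF hne
  obtain ⟨y', hy'Y, hlt, hle⟩ := hkgap y hyY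
  refine ⟨y', hy'Y, ?_, ?_⟩
  · by_contra h
    push_neg at h
    have := hmax y' ⟨hy'Y, h⟩
    simp only [id] at this
    omega
  · simp only [Set.mem_Iic] at hyn
    omega

theorem stmt9 (a s : ℕ → ℕ) (hs : StrictMono s)
    (hgap : ∀ i : ℕ, s i + a i < s (i + 1)) :
    (∀ m : ℕ, {i | a i ≤ m}.Finite) ↔
      (∀ Y : Set ℕ, Y.Infinite →
        (∃ k : ℕ, 1 ≤ k ∧ ∀ y ∈ Y, ∃ y' ∈ Y, y < y' ∧ y' ≤ y + k) →
        {i | ¬ 2 ≤ (Y ∩ {n | s i ≤ n ∧ n < s i + a i}).ncard}.Finite) := by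
  constructor
  · rintro h Y hY ⟨k, hk1, hkgap⟩
    obtain ⟨y0, hy0⟩ := hY.nonempty
    apply Set.Finite.subset ((h (2*k)).union (Set.finite_Iio y0))
    intro i hi
    simp only [Set.mem_setOf_eq, Set.mem_union, Set.mem_Iio] at hi ⊢
    by_contra hcon
    push_neg at hcon
    obtain ⟨h1, h2⟩ := hcon
    apply hi
    have hsy0 : y0 ≤ s i := le_trans h2 hs.le_apply
    obtain ⟨y1, hy1Y, hy1gt, hy1le⟩ := next_elem hy0 hkgap hsy0
    obtain ⟨y2, hy2Y, hy2gt, hy2le⟩ := next_elem hy0 hkgap (le_trans hsy0 hy1gt.le)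
    have hsub : ({y1, y2} : Set ℕ) ⊆ Y ∩ {n | s i ≤ n ∧ n < s i + a i} := by
      intro z hz
      rcases hz with rfl | hz
      · exact ⟨hy1Y, by omega, by omega⟩
      · simp only [Set.mem_singleton_iff] at hz
        subst hz
        exact ⟨hy2Y, by omega, by omega⟩
    have hfin : (Y ∩ {n | s i ≤ n ∧ n < s i + a i}).Finite := by
      apply (Set.finite_Ico (s i) (s i + a i)).subset
      rintro z ⟨_, hz1, hz2⟩
      exact ⟨hz1, hz2⟩
    calc 2 = ({y1, y2} : Set ℕ).ncard := (Set.ncard_pair (by omega)).symm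
      _ ≤ _ := Set.ncard_le_ncard hsub hfin
  · intro h m
    by_contra hinf
    set Y : Set ℕ := {n | (m+1) ∣ n} with hYdef
    have hYinf : Y.Infinite := by
      apply Set.infinite_of_injective_forall_mem (f := fun j : ℕ => (m+1)*j)
      · intro x y hxy
        exact Nat.eq_of_mul_eq_mul_left (by omega) hxy
      · intro j
        exact ⟨j, rfl⟩
    have hbad := h Y hYinf ⟨m+1, by omega, ?_⟩
    · apply hinf
      apply hbad.subset
      intro i hi
      simp only [Set.mem_setOf_eq] at hi ⊢
      intro h2
      have hfin : (Y ∩ {n | s i ≤ n ∧ n < s i + a i}).Finite := by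
        apply (Set.finite_Ico (s i) (s i + a i)).subset
        rintro z ⟨_, hz1, hz2⟩
        exact ⟨hz1, hz2⟩
      obtain ⟨x, y, hx, hy, hne⟩ := (Set.one_lt_ncard_iff hfin).1 (by omega)
      obtain ⟨⟨p, hp⟩, hx1, hx2⟩ := hx
      obtain ⟨⟨q, hq⟩, hy1, hy2⟩ := hy
      have hpq : p ≠ q := by rintro rfl; exact hne (hp.trans hq.symm)
      rcases Nat.lt_or_ge p q with hlt | hge
      · have h3 : (m+1) * (p+1) ≤ (m+1) * q := Nat.mul_le_mul_left _ hlt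
        have h4 : (m+1) * (p+1) = (m+1) * p + (m+1) := by ring
        omega
      · have hqp : q < p := by omega
        have h3 : (m+1) * (q+1) ≤ (m+1) * p := Nat.mul_le_mul_left _ hqp
        have h4 : (m+1) * (q+1) = (m+1) * q + (m+1) := by ring
        omega
    · intro y hy
      refine ⟨y + (m+1), ?_, by omega, by omega⟩
      exact dvd_add hy ⟨1, by ring⟩
end

section
/- Let R, I ⊆ ℕ with R ∩ I = ∅. Define J = I ∪ {z : there exist x, y ∈ I with x < z < y, z ≠ y − 1, and no element of I and no element of R lies strictly between x and y}. Then: (a) I ⊆ J and J ∩ R = ∅; (b) 0 ∈ J iff 0 ∈ I, and for every x ∈ ℕ, (x+1 ∈ J and x ∉ J) if and only if (x+1 ∈ I and x ∉ I); (c) for all x, y ∈ J with x < y, if no element of J and no element of R lies strictly between x and y, then y ≤ x + 2. -/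
theorem stmt10 (R I : Set ℕ) (hdisj : R ∩ I = ∅) :
    let J : Set ℕ := I ∪ {z | ∃ x ∈ I, ∃ y ∈ I, x < z ∧ z < y ∧ z ≠ y - 1 ∧
      (∀ w ∈ I, ¬(x < w ∧ w < y)) ∧ (∀ w ∈ R, ¬(x < w ∧ w < y))}
    (I ⊆ J ∧ J ∩ R = ∅) ∧
      ((0 ∈ J ↔ 0 ∈ I) ∧
        ∀ x : ℕ, (x + 1 ∈ J ∧ x ∉ J) ↔ (x + 1 ∈ I ∧ x ∉ I)) ∧
      (∀ x ∈ J, ∀ y ∈ J, x < y →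
        (∀ w ∈ J, ¬(x < w ∧ w < y)) → (∀ w ∈ R, ¬(x < w ∧ w < y)) → y ≤ x + 2) := by
  intro J
  have hd : ∀ z, z ∈ R → z ∉ I := fun z hzR hzI =>
    Set.eq_empty_iff_forall_notMem.mp hdisj z ⟨hzR, hzI⟩
  have hIJ : I ⊆ J := fun z hz => Or.inl hz
  have hJR : J ∩ R = ∅ := by
    apply Set.eq_empty_iff_forall_notMem.mpr
    rintro z ⟨hzJ, hzR⟩
    rcases hzJ with hzI | ⟨x, _, y, _, hxz, hzy, _, _, hRw⟩
    · exact hd z hzR hzI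
    · exact hRw z hzR ⟨hxz, hzy⟩
  refine ⟨⟨hIJ, hJR⟩, ⟨?_, ?_⟩, ?_⟩
  · constructor
    · rintro (h | ⟨x, _, y, _, hxz, _⟩)
      · exact h
      · omega
    · exact fun h => hIJ h
  · intro x
    constructor
    · rintro ⟨hx1J, hxJ⟩
      have hxI : x ∉ I := fun h => hxJ (hIJ h)
      rcases hx1J with h | ⟨a, haI, b, hbI, hax, hxb, hne, hIw, hRw⟩
      · exact ⟨h, hxI⟩
      · exfalso
        have hax' : a < x := by
          rcases lt_or_eq_of_le (Nat.lt_succ_iff.mp hax) with h | h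
          · exact h
          · exact absurd (h ▸ haI) hxI
        have hb2 : b ≥ 2 := by omega
        exact hxJ (Or.inr ⟨a, haI, b, hbI, hax', by omega, by omega, hIw, hRw⟩)
    · rintro ⟨hx1I, hxI⟩
      refine ⟨hIJ hx1I, ?_⟩
      rintro (h | ⟨a, haI, b, hbI, hax, hxb, hne, hIw, hRw⟩)
      · exact hxI h
      · exact hIw (x + 1) hx1I ⟨by omega, by omega⟩
  · intro x hxJ y hyJ hxy hJw hRw
    by_contra hle
    have hy3 : x + 3 ≤ y := by omega
    -- we derive x + 1 ∈ J, contradiction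
    apply hJw (x + 1) _ ⟨by omega, by omega⟩
    rcases hxJ with hxI | ⟨a, haI, b, hbI, hax, hxb, hne, hIw, hRw'⟩
    · -- x ∈ I
      rcases hyJ with hyI | ⟨c, hcI, d, hdI, hcy, hyd, hned, hIw, hRw'⟩
      · -- y ∈ I : witnesses x, y
        refine Or.inr ⟨x, hxI, y, hyI, by omega, by omega, by omega, ?_, hRw⟩
        intro w hwI hw
        exact hJw w (hIJ hwI) hw
      · -- y ∈ S : show c = x
        have hcx : c = x := by
          rcases lt_trichotomy c x with h | h | h
          · exact absurd ⟨by omega, by omega⟩ (hIw x hxI)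
          · exact h
          · exact absurd ⟨h, by omega⟩ (hJw c (hIJ hcI))
        subst hcx
        exact Or.inr ⟨c, hcI, d, hdI, by omega, by omega, by omega, hIw, hRw'⟩
    · -- x ∈ S with witnesses a, b
      have hby : ¬ b < y := fun h => hJw b (hIJ hbI) ⟨by omega, h⟩
      have hb3 : x + 3 ≤ b := by
        rcases Nat.lt_or_ge b (x + 3) with h | h
        · exfalso; omega
        · exact h
      exact Or.inr ⟨a, haI, b, hbI, by omega, by omega, by omega, hIw, hRw'⟩
end

section
/- Let R, I ⊆ ℕ with R infinite and R ∩ I = ∅, and suppose that for all consecutive u < w in I, either some element of R lies strictly between u and w, or w ≤ u + 2. Let X = R ∪ {x ∈ ℕ : for every y ∈ I, x and y differ by at least 2}. Then the gap-count sequence of (R, I) is unbounded if and only if U₁(X) holds. -/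
/-- The predicate `U₁(X)`: for every `k` there are consecutive positions of `X`
at distance at least `k`. -/
def U₁ (X : Set ℕ) : Prop :=
  ∀ k : ℕ, ∃ x x', ConsecutiveIn X x x' ∧ k ≤ x' - x

theorem stmt11 (R I : Set ℕ) (hR : R.Infinite) (hdisj : R ∩ I = ∅)
    (hstar : ∀ u ∈ I, ∀ w ∈ I, u < w → (∀ z ∈ I, ¬(u < z ∧ z < w)) →
      ((∃ r ∈ R, u < r ∧ r < w) ∨ w ≤ u + 2)) :
    GapUnbounded R I ↔
      U₁ (R ∪ {x : ℕ | ∀ y ∈ I, x + 2 ≤ y ∨ y + 2 ≤ x}) := by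
  classical
  set X := R ∪ {x : ℕ | ∀ y ∈ I, x + 2 ≤ y ∨ y + 2 ≤ x} with hXdef
  have hRX : ∀ z ∈ R, z ∈ X := fun z hz => Or.inl hz
  have hdisj' : ∀ z, z ∈ R → z ∈ I → False := by
    intro z h1 h2
    have : z ∈ R ∩ I := ⟨h1, h2⟩
    rw [hdisj] at this; exact this
  have hXnI : ∀ z ∈ X, z ∉ I := by
    intro z hz hzI
    rcases hz with hz | hz
    · exact hdisj' z hz hzI
    · rcases hz z hzI with h | h <;> omega
  constructor
  · -- GapUnbounded → U₁
    intro hgap k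
    obtain ⟨r, r', ⟨hrR, hr'R, hrr', hnone⟩, hcard⟩ := hgap (k + 1)
    have hSfin : {x ∈ I | r < x ∧ x < r'}.Finite :=
      (Set.finite_Ioo r r').subset (fun z hz => ⟨hz.2.1, hz.2.2⟩)
    set S := hSfin.toFinset with hSdef
    have hmemS : ∀ z, z ∈ S ↔ z ∈ I ∧ r < z ∧ z < r' := by
      intro z; rw [hSdef, Set.Finite.mem_toFinset]; exact Iff.rfl
    have hcardS : k + 1 ≤ S.card := by
      rwa [Set.ncard_eq_toFinset_card _ hSfin] at hcard
    have hSne : S.Nonempty := Finset.card_pos.mp (by omega)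
    set a := S.min' hSne with hadef
    set b := S.max' hSne with hbdef
    have haS : a ∈ S := S.min'_mem hSne
    have hbS : b ∈ S := S.max'_mem hSne
    have hra : r < a := ((hmemS a).mp haS).2.1
    have hbr' : b < r' := ((hmemS b).mp hbS).2.2
    -- every point between a and b is within distance 1 of S
    have hcover : ∀ z, a ≤ z → z ≤ b → ∃ s ∈ S, s ≤ z ∧ z ≤ s + 1 := by
      intro z hz1 hz2
      set F := S.filter (· ≤ z) with hFdef
      have hFne : F.Nonempty := ⟨a, by simp [hFdef, haS, hz1]⟩
      set s := F.max' hFne with hsdef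
      have hsF : s ∈ F := F.max'_mem hFne
      have hsS : s ∈ S := (Finset.mem_filter.mp hsF).1
      have hsz : s ≤ z := by simpa [hFdef] using (Finset.mem_filter.mp hsF).2
      by_cases hz : z ≤ s + 1
      · exact ⟨s, hsS, hsz, hz⟩
      · exfalso
        have hzb : z < b := by
          rcases lt_or_ge z b with h | h
          · exact h
          · have : b ≤ z := by omega
            have : b ∈ F := Finset.mem_filter.mpr ⟨hbS, by simpa [hFdef] using this⟩
            have := F.le_max' b this
            omega
        set G := S.filter (fun w => z < w) with hGdef
        have hGne : G.Nonempty := ⟨b, Finset.mem_filter.mpr ⟨hbS, by simpa [hGdef] using hzb⟩⟩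
        set w := G.min' hGne with hwdef
        have hwG : w ∈ G := G.min'_mem hGne
        have hwS : w ∈ S := (Finset.mem_filter.mp hwG).1
        have hzw : z < w := by simpa [hGdef] using (Finset.mem_filter.mp hwG).2
        have hsI : s ∈ I := ((hmemS s).mp hsS).1
        have hwI : w ∈ I := ((hmemS w).mp hwS).1
        have hconsec : ∀ z' ∈ I, ¬(s < z' ∧ z' < w) := by
          intro z' hz'I ⟨h1, h2⟩
          have hz'S : z' ∈ S := (hmemS z').mpr
            ⟨hz'I, by
              have := ((hmemS s).mp hsS).2.1
              have := ((hmemS w).mp hwS).2.2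
              omega⟩
          rcases le_or_gt z' z with h | h
          · have : z' ∈ F := Finset.mem_filter.mpr ⟨hz'S, by simpa [hFdef] using h⟩
            have := F.le_max' z' this; omega
          · have : z' ∈ G := Finset.mem_filter.mpr ⟨hz'S, by simpa [hGdef] using h⟩
            have := G.min'_le z' this; omega
        rcases hstar s hsI w hwI (by omega) hconsec with ⟨ρ, hρR, h1, h2⟩ | h
        · exact hnone ρ hρR ⟨by have := ((hmemS s).mp hsS).2.1; omega,
            by have := ((hmemS w).mp hwS).2.2; omega⟩
        · omega
    -- x := largest element of X that is ≤ a - 1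
    have ha1 : 1 ≤ a := by omega
    set T := (Finset.Iic (a - 1)).filter (· ∈ X) with hTdef
    have hTne : T.Nonempty := ⟨r, Finset.mem_filter.mpr ⟨Finset.mem_Iic.mpr (by omega), hRX r hrR⟩⟩
    set x := T.max' hTne with hxdef
    have hxT : x ∈ T := T.max'_mem hTne
    have hxX : x ∈ X := (Finset.mem_filter.mp hxT).2
    have hxa : x ≤ a - 1 := Finset.mem_Iic.mp (Finset.mem_filter.mp hxT).1
    -- x' := smallest element of X that is ≥ b + 1
    set T' := (Finset.Icc (b + 1) r').filter (· ∈ X) with hT'def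
    have hT'ne : T'.Nonempty :=
      ⟨r', Finset.mem_filter.mpr ⟨Finset.mem_Icc.mpr ⟨by omega, le_refl _⟩, hRX r' hr'R⟩⟩
    set x' := T'.min' hT'ne with hx'def
    have hx'T : x' ∈ T' := T'.min'_mem hT'ne
    have hx'X : x' ∈ X := (Finset.mem_filter.mp hx'T).2
    have hx'b : b + 1 ≤ x' := (Finset.mem_Icc.mp (Finset.mem_filter.mp hx'T).1).1
    have hx'r' : x' ≤ r' := (Finset.mem_Icc.mp (Finset.mem_filter.mp hx'T).1).2
    have hab : a ≤ b := S.min'_le b hbS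
    refine ⟨x, x', ⟨hxX, hx'X, by omega, ?_⟩, ?_⟩
    · intro z hzX ⟨h1, h2⟩
      rcases le_or_gt z (a - 1) with h | h
      · have : z ∈ T := Finset.mem_filter.mpr ⟨Finset.mem_Iic.mpr h, hzX⟩
        have := T.le_max' z this; omega
      rcases le_or_gt (b + 1) z with h' | h'
      · have hzr' : z ≤ r' := by omega
        have : z ∈ T' := Finset.mem_filter.mpr ⟨Finset.mem_Icc.mpr ⟨h', hzr'⟩, hzX⟩
        have := T'.min'_le z this; omega
      · -- a ≤ z ≤ b
        obtain ⟨s, hsS, hs1, hs2⟩ := hcover z (by omega) (by omega)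
        have hsI : s ∈ I := ((hmemS s).mp hsS).1
        rcases hzX with hzR | hzX
        · exact hnone z hzR ⟨by omega, by
            have := ((hmemS s).mp hsS).2.2; omega⟩
        · rcases hzX s hsI with hh | hh <;> omega
    · -- k ≤ x' - x
      have hcardIcc : S.card ≤ b - a + 1 := by
        have : S ⊆ Finset.Icc a b := fun z hz =>
          Finset.mem_Icc.mpr ⟨S.min'_le z hz, S.le_max' z hz⟩
        have := Finset.card_le_card this
        rw [Nat.card_Icc] at this; omega
      omega
  · -- U₁ → GapUnbounded
    intro hU k
    obtain ⟨r₀, hr₀⟩ := hR.nonempty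
    obtain ⟨x, x', ⟨hxX, hx'X, hxx', hnoneX⟩, hgapk⟩ := hU (3 * k + 3 + r₀)
    have hxnI : x ∉ I := hXnI x hxX
    have hx'nI : x' ∉ I := hXnI x' hx'X
    -- every interior point is within distance 1 of an I-point in the interior
    have hcover : ∀ t, x < t → t < x' → ∃ u, u ∈ I ∧ x < u ∧ u < x' ∧ u ≤ t + 1 ∧ t ≤ u + 1 := by
      intro t ht1 ht2
      have htX : t ∉ X := fun h => hnoneX t h ⟨ht1, ht2⟩
      have htfar : ¬ ∀ y ∈ I, t + 2 ≤ y ∨ y + 2 ≤ t := fun h => htX (Or.inr h)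
      push_neg at htfar
      obtain ⟨u, huI, hu1, hu2⟩ := htfar
      have hux : x < u := by
        rcases eq_or_lt_of_le (show x ≤ u by omega) with h | h
        · exact absurd (h ▸ huI) hxnI
        · exact h
      have hux' : u < x' := by
        rcases eq_or_lt_of_le (show u ≤ x' by omega) with h | h
        · exact absurd (h ▸ huI) hx'nI
        · exact h
      exact ⟨u, huI, hux, hux', by omega, by omega⟩
    -- the interior I-points
    have hS'fin : {u ∈ I | x < u ∧ u < x'}.Finite :=
      (Set.finite_Ioo x x').subset (fun z hz => ⟨hz.2.1, hz.2.2⟩)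
    set S' := hS'fin.toFinset with hS'def
    have hmemS' : ∀ z, z ∈ S' ↔ z ∈ I ∧ x < z ∧ z < x' := by
      intro z; rw [hS'def, Set.Finite.mem_toFinset]; exact Iff.rfl
    have hcount : k + 1 ≤ S'.card := by
      have hsub : Finset.Ioo x x' ⊆ S'.biUnion (fun u => Finset.Icc (u - 1) (u + 1)) := by
        intro t ht
        rw [Finset.mem_Ioo] at ht
        obtain ⟨u, huI, h1, h2, h3, h4⟩ := hcover t ht.1 ht.2
        exact Finset.mem_biUnion.mpr ⟨u, (hmemS' u).mpr ⟨huI, h1, h2⟩,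
          Finset.mem_Icc.mpr ⟨by omega, by omega⟩⟩
      have h1 := Finset.card_le_card hsub
      have h2 := Finset.card_biUnion_le (s := S') (t := fun u => Finset.Icc (u - 1) (u + 1))
      have h3 : ∑ u ∈ S', (Finset.Icc (u - 1) (u + 1)).card ≤ ∑ u ∈ S', 3 := by
        apply Finset.sum_le_sum
        intro u _
        rw [Nat.card_Icc]; omega
      rw [Finset.sum_const, smul_eq_mul] at h3
      rw [Nat.card_Ioo] at h1
      omega
    -- no R in the interior
    have hRint : ∀ z ∈ R, ¬(x < z ∧ z < x') := by
      intro z hz ⟨h1, h2⟩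
      exact hnoneX z (hRX z hz) ⟨h1, h2⟩
    -- R has an element ≤ x
    have hr₀x : r₀ ≤ x := by
      rcases le_or_gt r₀ x with h | h
      · exact h
      · exfalso
        have : x' ≤ r₀ := by
          by_contra h'
          exact hRint r₀ hr₀ ⟨h, by omega⟩
        omega
    set T := (Finset.Iic x).filter (· ∈ R) with hTdef
    have hTne : T.Nonempty := ⟨r₀, Finset.mem_filter.mpr ⟨Finset.mem_Iic.mpr hr₀x, hr₀⟩⟩
    set r := T.max' hTne with hrdef
    have hrT : r ∈ T := T.max'_mem hTne
    have hrR : r ∈ R := (Finset.mem_filter.mp hrT).2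
    have hrx : r ≤ x := Finset.mem_Iic.mp (Finset.mem_filter.mp hrT).1
    obtain ⟨ρ', hρ'R, hρ'⟩ := hR.exists_gt x'
    set T' := (Finset.Icc x' ρ').filter (· ∈ R) with hT'def
    have hT'ne : T'.Nonempty :=
      ⟨ρ', Finset.mem_filter.mpr ⟨Finset.mem_Icc.mpr ⟨by omega, le_refl _⟩, hρ'R⟩⟩
    set r' := T'.min' hT'ne with hr'def
    have hr'T : r' ∈ T' := T'.min'_mem hT'ne
    have hr'R : r' ∈ R := (Finset.mem_filter.mp hr'T).2
    have hx'r' : x' ≤ r' := (Finset.mem_Icc.mp (Finset.mem_filter.mp hr'T).1).1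
    have hr'ρ' : r' ≤ ρ' := (Finset.mem_Icc.mp (Finset.mem_filter.mp hr'T).1).2
    refine ⟨r, r', ⟨hrR, hr'R, by omega, ?_⟩, ?_⟩
    · intro z hzR ⟨h1, h2⟩
      rcases le_or_gt z x with h | h
      · have : z ∈ T := Finset.mem_filter.mpr ⟨Finset.mem_Iic.mpr h, hzR⟩
        have := T.le_max' z this; omega
      rcases lt_or_ge z x' with h' | h'
      · exact hRint z hzR ⟨h, h'⟩
      · have hzρ' : z ≤ ρ' := by omega
        have : z ∈ T' := Finset.mem_filter.mpr ⟨Finset.mem_Icc.mpr ⟨h', hzρ'⟩, hzR⟩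
        have := T'.min'_le z this; omega
    · -- count
      have hsub : {u ∈ I | x < u ∧ u < x'} ⊆ {u ∈ I | r < u ∧ u < r'} := by
        intro z ⟨hz1, hz2, hz3⟩
        exact ⟨hz1, by omega, by omega⟩
      have hfin : {u ∈ I | r < u ∧ u < r'}.Finite :=
        (Set.finite_Ioo r r').subset (fun z hz => ⟨hz.2.1, hz.2.2⟩)
      have := Set.ncard_le_ncard hsub hfin
      rw [Set.ncard_eq_toFinset_card _ hS'fin, ← hS'def] at this
      omega
end
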